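/- For any eigenvalue λ of a block matrix Σ (with square diagonal blocks), there exists at least one block index i such that ‖(Σ_{i,i} − λI)^{-1}‖^{-1} ≤ ∑_{k≠i} ‖Σ_{i,k}‖, where if Σ_{i,i} − λI is singular the left-hand side is interpreted as 0. -/

import Mathlib

open Matrix Finset MeasureTheory Real

noncomputable def specNorm {d : ℕ} (A : Matrix (Fin d) (Fin d) ℝ) : ℝ :=
  ‖(Matrix.toEuclideanLin A).toContinuousLinearMap‖

noncomputable def specNormC {d : ℕ} (A : Matrix (Fin d) (Fin d) ℂ) : ℝ :=
  ‖(Matrix.toEuclideanLin A).toContinuousLinearMap‖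

/-- The `(i,j)` block of a blocked matrix. -/
def blk {𝕜 : Type*} {n d : ℕ} (S : Matrix (Fin n × Fin d) (Fin n × Fin d) 𝕜) (i j : Fin n) :
    Matrix (Fin d) (Fin d) 𝕜 := fun a b => S (i, a) (j, b)

/-- Smallest real eigenvalue (as the infimum of the real spectrum). -/
noncomputable def lamMin {m : Type*} [Fintype m] [DecidableEq m]
    (A : Matrix m m ℝ) : ℝ := sInf (spectrum ℝ A)

/-- Smallest real eigenvalue of a complex matrix. -/
noncomputable def lamMinC {m : Type*} [Fintype m] [DecidableEq m]
    (A : Matrix m m ℂ) : ℝ := sInf {x : ℝ | (x : ℂ) ∈ spectrum ℂ A}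

lemma specNormC_nonneg {d : ℕ} (A : Matrix (Fin d) (Fin d) ℂ) : 0 ≤ specNormC A :=
  norm_nonneg _

lemma specNormC_mulVec_le {d : ℕ} (A : Matrix (Fin d) (Fin d) ℂ) (x : Fin d → ℂ) :
    ‖(WithLp.equiv 2 (Fin d → ℂ)).symm (A.mulVec x)‖ ≤
      specNormC A * ‖(WithLp.equiv 2 (Fin d → ℂ)).symm x‖ := by
  change ‖Matrix.toEuclideanLin A ((WithLp.equiv 2 (Fin d → ℂ)).symm x)‖ ≤ _
  exact (Matrix.toEuclideanLin A).toContinuousLinearMap.le_opNorm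
    ((WithLp.equiv 2 (Fin d → ℂ)).symm x)

theorem stmt2 {n d : ℕ} (S : Matrix (Fin n × Fin d) (Fin n × Fin d) ℂ) (lam : ℂ)
    (hlam : lam ∈ spectrum ℂ S) :
    ∃ i, (specNormC ((blk S i i - lam • 1)⁻¹))⁻¹ ≤ ∑ k ∈ univ \ {i}, specNormC (blk S i k) := by
  classical
  have hdet : (lam • (1 : Matrix (Fin n × Fin d) (Fin n × Fin d) ℂ) - S).det = 0 := by
    rw [spectrum.mem_iff] at hlam
    by_contra h
    apply hlam
    rw [Algebra.algebraMap_eq_smul_one]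
    exact (Matrix.isUnit_iff_isUnit_det _).mpr (isUnit_iff_ne_zero.mpr h)
  obtain ⟨v, hv0, hv⟩ := (Matrix.exists_mulVec_eq_zero_iff).mpr hdet
  have hSv : S.mulVec v = lam • v := by
    rw [Matrix.sub_mulVec, Matrix.smul_mulVec, Matrix.one_mulVec, sub_eq_zero] at hv
    exact hv.symm
  obtain ⟨p, hp⟩ := Function.ne_iff.mp hv0
  haveI : Nonempty (Fin n) := ⟨p.1⟩
  set vb : Fin n → Fin d → ℂ := fun k a => v (k, a) with hvbdef
  let e : (Fin d → ℂ) ≃ₗ[ℂ] EuclideanSpace ℂ (Fin d) :=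
    (WithLp.linearEquiv 2 ℂ (Fin d → ℂ)).symm
  have he : ∀ x : Fin d → ℂ, e x = (WithLp.equiv 2 (Fin d → ℂ)).symm x := fun _ => rfl
  obtain ⟨i, -, hi⟩ := Finset.exists_max_image Finset.univ (fun k => ‖e (vb k)‖)
    Finset.univ_nonempty
  refine ⟨i, ?_⟩
  have hkey : ∑ k, (blk S i k).mulVec (vb k) = lam • vb i := by
    funext a
    have h := congrFun hSv (i, a)
    simp only [Matrix.mulVec, dotProduct, Fintype.sum_prod_type] at h
    simpa [Matrix.mulVec, dotProduct, blk, Finset.sum_apply] using h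
  have h2 : (blk S i i - lam • 1).mulVec (vb i)
      = -∑ k ∈ Finset.univ \ {i}, (blk S i k).mulVec (vb k) := by
    have hs : ∑ k, (blk S i k).mulVec (vb k)
        = (∑ k ∈ Finset.univ \ {i}, (blk S i k).mulVec (vb k)) + (blk S i i).mulVec (vb i) :=
      Finset.sum_eq_sum_sdiff_singleton_add (Finset.mem_univ i) _
    rw [hs] at hkey
    have hA : (blk S i i).mulVec (vb i)
        = lam • vb i - ∑ k ∈ Finset.univ \ {i}, (blk S i k).mulVec (vb k) :=
      eq_sub_of_add_eq' hkey
    rw [Matrix.sub_mulVec, Matrix.smul_mulVec, Matrix.one_mulVec, hA]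
    abel
  -- positivity of ‖vb i‖
  have hwi : 0 < ‖e (vb i)‖ := by
    have hne : e (vb p.1) ≠ 0 := by
      intro h0
      apply hp
      have := congrFun (congrArg (WithLp.equiv 2 (Fin d → ℂ)) h0) p.2
      simpa [he, vb] using this
    calc (0:ℝ) < ‖e (vb p.1)‖ := norm_pos_iff.mpr hne
      _ ≤ ‖e (vb i)‖ := hi p.1 (Finset.mem_univ _)
  by_cases hU : IsUnit (blk S i i - lam • 1).det
  · set c := specNormC ((blk S i i - lam • 1)⁻¹) with hc
    set R := ∑ k ∈ Finset.univ \ {i}, specNormC (blk S i k) with hR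
    have hbound : ‖e ((blk S i i - lam • 1).mulVec (vb i))‖ ≤ R * ‖e (vb i)‖ := by
      calc ‖e ((blk S i i - lam • 1).mulVec (vb i))‖
          = ‖∑ k ∈ Finset.univ \ {i}, e ((blk S i k).mulVec (vb k))‖ := by
            rw [h2, map_neg, norm_neg, map_sum]
        _ ≤ ∑ k ∈ Finset.univ \ {i}, ‖e ((blk S i k).mulVec (vb k))‖ :=
            norm_sum_le _ _
        _ ≤ ∑ k ∈ Finset.univ \ {i}, specNormC (blk S i k) * ‖e (vb i)‖ := by
            refine Finset.sum_le_sum fun k _ => ?_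
            calc ‖e ((blk S i k).mulVec (vb k))‖
                ≤ specNormC (blk S i k) * ‖e (vb k)‖ := by
                  rw [he, he]; exact specNormC_mulVec_le _ _
              _ ≤ specNormC (blk S i k) * ‖e (vb i)‖ :=
                  mul_le_mul_of_nonneg_left (hi k (Finset.mem_univ _)) (specNormC_nonneg _)
        _ = R * ‖e (vb i)‖ := by rw [hR, Finset.sum_mul]
    have hinv : (blk S i i - lam • 1)⁻¹.mulVec ((blk S i i - lam • 1).mulVec (vb i)) = vb i := by
      rw [Matrix.mulVec_mulVec, Matrix.nonsing_inv_mul _ hU, Matrix.one_mulVec]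
    have h1 : ‖e (vb i)‖ ≤ c * ‖e ((blk S i i - lam • 1).mulVec (vb i))‖ := by
      conv_lhs => rw [← hinv]
      rw [he, he]
      exact specNormC_mulVec_le _ _
    have hRnn : 0 ≤ R := Finset.sum_nonneg fun k _ => specNormC_nonneg _
    have hcnn : 0 ≤ c := specNormC_nonneg _
    have hchain : ‖e (vb i)‖ ≤ c * (R * ‖e (vb i)‖) :=
      h1.trans (mul_le_mul_of_nonneg_left hbound hcnn)
    have h1cR : 1 ≤ R * c := by nlinarith
    have hcpos : 0 < c := by nlinarith
    have := (div_le_iff₀ hcpos).mpr h1cR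
    simpa [one_div] using this
  · rw [Matrix.nonsing_inv_apply_not_isUnit _ hU]
    have h0 : specNormC (0 : Matrix (Fin d) (Fin d) ℂ) = 0 := by
      unfold specNormC
      rw [map_zero, map_zero, norm_zero]
    rw [h0, _root_.inv_zero]
    exact Finset.sum_nonneg fun k _ => specNormC_nonneg _
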